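/- Let T > 0. The smallest positive value of m for which the Dirichlet problem z''(t) = −m z(−t) on [-T,T] with z(−T)=z(T)=0 has a nontrivial solution is m = (π/(2T))²; a corresponding eigenfunction is z(t) = cos(π t/(2T)). -/

import Mathlib

open Set Real

lemma iter2_eq {f f1 f2 : ℝ → ℝ} {s : Set ℝ} (hs : UniqueDiffOn ℝ s) {t : ℝ} (ht : t ∈ s)
    (h1 : ∀ x, HasDerivAt f (f1 x) x) (h2 : ∀ x, HasDerivAt f1 (f2 x) x) :
    iteratedDerivWithin 2 f s t = f2 t := by
  have e1 : Set.EqOn (iteratedDerivWithin 1 f s) f1 s := fun x hx => by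
    rw [iteratedDerivWithin_one]
    exact ((h1 x).hasDerivWithinAt).derivWithin (hs x hx)
  rw [show (2:ℕ) = 1+1 from rfl, iteratedDerivWithin_succ,
    derivWithin_congr e1 (e1 ht)]
  exact ((h2 t).hasDerivWithinAt).derivWithin (hs t ht)

lemma phi_deriv1 (T : ℝ) (x : ℝ) :
    HasDerivAt (fun t => Real.cos (Real.pi * t / (2 * T)))
      (-Real.sin (Real.pi * x / (2 * T)) * (Real.pi / (2 * T))) x := by
  have h : HasDerivAt (fun t : ℝ => Real.pi * t / (2 * T)) (Real.pi / (2 * T)) x := by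
    simpa using ((hasDerivAt_id x).const_mul Real.pi).div_const (2 * T)
  exact h.cos

lemma phi_deriv2 (T : ℝ) (x : ℝ) :
    HasDerivAt (fun t => -Real.sin (Real.pi * t / (2 * T)) * (Real.pi / (2 * T)))
      (-((Real.pi / (2 * T)) ^ 2) * Real.cos (Real.pi * (-x) / (2 * T))) x := by
  have h : HasDerivAt (fun t : ℝ => Real.pi * t / (2 * T)) (Real.pi / (2 * T)) x := by
    simpa using ((hasDerivAt_id x).const_mul Real.pi).div_const (2 * T)
  have := (h.sin.neg).mul_const (Real.pi / (2 * T))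
  refine this.congr_deriv ?_
  rw [show Real.pi * (-x) / (2 * T) = -(Real.pi * x / (2 * T)) by ring, Real.cos_neg]
  ring

lemma cos_rep {T m r : ℝ} (hT : 0 < T) (hr : r ^ 2 = m) {e e1 : ℝ → ℝ}
    (heC : ContinuousOn e (Icc 0 T)) (he1C : ContinuousOn e1 (Icc 0 T))
    (he : ∀ t ∈ Ioo (-T) T, HasDerivAt e (e1 t) t)
    (he1 : ∀ t ∈ Ioo (-T) T, HasDerivAt e1 (-m * e t) t) :
    ∀ t ∈ Icc 0 T, r * e t = r * e 0 * Real.cos (r * t) + e1 0 * Real.sin (r * t) := by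
  have hIoo : ∀ x ∈ Ico (0:ℝ) T, x ∈ Ioo (-T) T := fun x hx => ⟨by linarith [hx.1], hx.2⟩
  have hcos : ∀ x : ℝ, HasDerivAt (fun u => Real.cos (r * u)) (-Real.sin (r * x) * (r * 1)) x :=
    fun x => ((hasDerivAt_id x).const_mul r).cos
  have hsin : ∀ x : ℝ, HasDerivAt (fun u => Real.sin (r * u)) (Real.cos (r * x) * (r * 1)) x :=
    fun x => ((hasDerivAt_id x).const_mul r).sin
  have hcosC : Continuous fun u : ℝ => Real.cos (r * u) := Real.continuous_cos.comp (continuous_const.mul continuous_id)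
  have hsinC : Continuous fun u : ℝ => Real.sin (r * u) := Real.continuous_sin.comp (continuous_const.mul continuous_id)
  have hW : ∀ x ∈ Icc (0:ℝ) T,
      e1 x * Real.cos (r * x) + r * e x * Real.sin (r * x)
        = e1 0 * Real.cos (r * 0) + r * e 0 * Real.sin (r * 0) := by
    apply constant_of_has_deriv_right_zero
    · exact (he1C.mul (hcosC.continuousOn)).add ((heC.const_smul r).mul (hsinC.continuousOn))
    · intro x hx
      have h := ((he1 x (hIoo x hx)).mul (hcos x)).add
        (((he x (hIoo x hx)).const_mul r).mul (hsin x))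
      have h0 : (-m * e x) * Real.cos (r * x) + e1 x * (-Real.sin (r * x) * (r * 1))
          + ((r * e1 x) * Real.sin (r * x) + r * e x * (Real.cos (r * x) * (r * 1))) = 0 := by
        rw [← hr]; ring
      rw [h0] at h
      exact h.hasDerivWithinAt
  have hV : ∀ x ∈ Icc (0:ℝ) T,
      e1 x * Real.sin (r * x) - r * e x * Real.cos (r * x)
        = e1 0 * Real.sin (r * 0) - r * e 0 * Real.cos (r * 0) := by
    apply constant_of_has_deriv_right_zero
    · exact (he1C.mul (hsinC.continuousOn)).sub ((heC.const_smul r).mul (hcosC.continuousOn))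
    · intro x hx
      have h := ((he1 x (hIoo x hx)).mul (hsin x)).sub
        (((he x (hIoo x hx)).const_mul r).mul (hcos x))
      have h0 : (-m * e x) * Real.sin (r * x) + e1 x * (Real.cos (r * x) * (r * 1))
          - ((r * e1 x) * Real.cos (r * x) + r * e x * (-Real.sin (r * x) * (r * 1))) = 0 := by
        rw [← hr]; ring
      rw [h0] at h
      exact h.hasDerivWithinAt
  intro t ht
  have h1 := hW t ht
  have h2 := hV t ht
  simp only [mul_zero, Real.cos_zero, Real.sin_zero, mul_one, add_zero, sub_zero,
    zero_sub] at h1 h2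
  have hpyth := Real.sin_sq_add_cos_sq (r * t)
  linear_combination Real.sin (r*t) * h1 - Real.cos (r*t) * h2 - r * e t * hpyth

lemma sinh_rep {T m r : ℝ} (hT : 0 < T) (hr : r ^ 2 = m) {o o1 : ℝ → ℝ}
    (hoC : ContinuousOn o (Icc 0 T)) (ho1C : ContinuousOn o1 (Icc 0 T))
    (ho : ∀ t ∈ Ioo (-T) T, HasDerivAt o (o1 t) t)
    (ho1 : ∀ t ∈ Ioo (-T) T, HasDerivAt o1 (m * o t) t) :
    ∀ t ∈ Icc 0 T, r * o t = r * o 0 * Real.cosh (r * t) + o1 0 * Real.sinh (r * t) := by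
  have hIoo : ∀ x ∈ Ico (0:ℝ) T, x ∈ Ioo (-T) T := fun x hx => ⟨by linarith [hx.1], hx.2⟩
  have hcosh : ∀ x : ℝ, HasDerivAt (fun u => Real.cosh (r * u)) (Real.sinh (r * x) * (r * 1)) x :=
    fun x => ((hasDerivAt_id x).const_mul r).cosh
  have hsinh : ∀ x : ℝ, HasDerivAt (fun u => Real.sinh (r * u)) (Real.cosh (r * x) * (r * 1)) x :=
    fun x => ((hasDerivAt_id x).const_mul r).sinh
  have hcoshC : Continuous fun u : ℝ => Real.cosh (r * u) := Real.continuous_cosh.comp (continuous_const.mul continuous_id)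
  have hsinhC : Continuous fun u : ℝ => Real.sinh (r * u) := Real.continuous_sinh.comp (continuous_const.mul continuous_id)
  have hW : ∀ x ∈ Icc (0:ℝ) T,
      o1 x * Real.cosh (r * x) - r * o x * Real.sinh (r * x)
        = o1 0 * Real.cosh (r * 0) - r * o 0 * Real.sinh (r * 0) := by
    apply constant_of_has_deriv_right_zero
    · exact (ho1C.mul (hcoshC.continuousOn)).sub ((hoC.const_smul r).mul (hsinhC.continuousOn))
    · intro x hx
      have h := ((ho1 x (hIoo x hx)).mul (hcosh x)).sub
        (((ho x (hIoo x hx)).const_mul r).mul (hsinh x))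
      have h0 : (m * o x) * Real.cosh (r * x) + o1 x * (Real.sinh (r * x) * (r * 1))
          - ((r * o1 x) * Real.sinh (r * x) + r * o x * (Real.cosh (r * x) * (r * 1))) = 0 := by
        rw [← hr]; ring
      rw [h0] at h
      exact h.hasDerivWithinAt
  have hV : ∀ x ∈ Icc (0:ℝ) T,
      o1 x * Real.sinh (r * x) - r * o x * Real.cosh (r * x)
        = o1 0 * Real.sinh (r * 0) - r * o 0 * Real.cosh (r * 0) := by
    apply constant_of_has_deriv_right_zero
    · exact (ho1C.mul (hsinhC.continuousOn)).sub ((hoC.const_smul r).mul (hcoshC.continuousOn))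
    · intro x hx
      have h := ((ho1 x (hIoo x hx)).mul (hsinh x)).sub
        (((ho x (hIoo x hx)).const_mul r).mul (hcosh x))
      have h0 : (m * o x) * Real.sinh (r * x) + o1 x * (Real.cosh (r * x) * (r * 1))
          - ((r * o1 x) * Real.cosh (r * x) + r * o x * (Real.sinh (r * x) * (r * 1))) = 0 := by
        rw [← hr]; ring
      rw [h0] at h
      exact h.hasDerivWithinAt
  intro t ht
  have h1 := hW t ht
  have h2 := hV t ht
  simp only [mul_zero, Real.cosh_zero, Real.sinh_zero, mul_one, add_zero, sub_zero,
    zero_sub] at h1 h2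
  have hpyth : Real.cosh (r*t) ^ 2 = Real.sinh (r*t) ^ 2 + 1 := Real.cosh_sq (r*t)
  linear_combination Real.sinh (r*t) * h1 - Real.cosh (r*t) * h2 - r * o t * hpyth

/-- `m` is a Dirichlet eigenvalue of the reflection problem
`z''(t) = -m z(-t)` on `[-T,T]`, `z(-T) = z(T) = 0`. -/
def IsEig15 (T m : ℝ) : Prop :=
  ∃ z : ℝ → ℝ, ContDiffOn ℝ 2 z (Set.Icc (-T) T) ∧
    (∃ t ∈ Set.Icc (-T) T, z t ≠ 0) ∧
    (∀ t ∈ Set.Icc (-T) T,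
      iteratedDerivWithin 2 z (Set.Icc (-T) T) t = -m * z (-t)) ∧
    z (-T) = 0 ∧ z T = 0

lemma min_eig (T : ℝ) (hT : 0 < T) (m : ℝ) (hm : 0 < m) (h : IsEig15 T m) :
    (Real.pi / (2 * T)) ^ 2 ≤ m := by
  obtain ⟨z, hzC, ⟨t0, ht0, hzt0⟩, hODE, hzmT, hzT⟩ := h
  have hTT : -T < T := by linarith
  have hsU : UniqueDiffOn ℝ (Icc (-T) T) := uniqueDiffOn_Icc hTT
  set z1 := derivWithin z (Icc (-T) T) with hz1def
  have hz1C1 : ContDiffOn ℝ 1 z1 (Icc (-T) T) := hzC.derivWithin hsU (by norm_num)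
  have hzCont : ContinuousOn z (Icc (-T) T) := hzC.continuousOn
  have hz1Cont : ContinuousOn z1 (Icc (-T) T) := hz1C1.continuousOn
  have hzD : DifferentiableOn ℝ z (Icc (-T) T) := hzC.differentiableOn (by norm_num)
  have hz1D : DifferentiableOn ℝ z1 (Icc (-T) T) := hz1C1.differentiableOn (by norm_num)
  have hsub : Ioo (-T) T ⊆ Icc (-T) T := Ioo_subset_Icc_self
  have hnhds : ∀ t ∈ Ioo (-T) T, Icc (-T) T ∈ nhds t := fun t ht => Icc_mem_nhds ht.1 ht.2
  have hz' : ∀ t ∈ Ioo (-T) T, HasDerivAt z (z1 t) t := fun t ht =>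
    ((hzD t (hsub ht)).hasDerivWithinAt).hasDerivAt (hnhds t ht)
  have hkey : ∀ t ∈ Icc (-T) T, derivWithin z1 (Icc (-T) T) t = -m * z (-t) := by
    intro t ht
    have h2 := hODE t ht
    rw [show (2:ℕ) = 1+1 from rfl, iteratedDerivWithin_succ] at h2
    have e1 : Set.EqOn (iteratedDerivWithin 1 z (Icc (-T) T)) z1 (Icc (-T) T) := fun x hx =>
      congrFun iteratedDerivWithin_one x
    rwa [derivWithin_congr e1 (e1 ht)] at h2
  have hz1' : ∀ t ∈ Ioo (-T) T, HasDerivAt z1 (-m * z (-t)) t := fun t ht => by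
    have h := ((hz1D t (hsub ht)).hasDerivWithinAt).hasDerivAt (hnhds t ht)
    rwa [hkey t (hsub ht)] at h
  have hnegIoo : ∀ t ∈ Ioo (-T) T, -t ∈ Ioo (-T) T := fun t ht =>
    ⟨by linarith [ht.2], by linarith [ht.1]⟩
  have hnegderiv : ∀ (f g : ℝ → ℝ), (∀ u ∈ Ioo (-T) T, HasDerivAt f (g u) u) →
      ∀ t ∈ Ioo (-T) T, HasDerivAt (fun u => f (-u)) (-g (-t)) t := by
    intro f g hf t ht
    have h := (hf (-t) (hnegIoo t ht)).comp t (hasDerivAt_neg t)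
    exact h.congr_deriv (by ring)
  -- derivatives of even/odd parts
  have he' : ∀ t ∈ Ioo (-T) T,
      HasDerivAt (fun u => (z u + z (-u))/2) ((z1 t - z1 (-t))/2) t := fun t ht => by
    have h := ((hz' t ht).add (hnegderiv z z1 hz' t ht)).div_const 2
    refine h.congr_deriv ?_
    ring
  have he1' : ∀ t ∈ Ioo (-T) T,
      HasDerivAt (fun u => (z1 u - z1 (-u))/2) (-m * ((z t + z (-t))/2)) t := fun t ht => by
    have h := ((hz1' t ht).sub (hnegderiv z1 (fun u => -m * z (-u)) hz1' t ht)).div_const 2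
    refine h.congr_deriv ?_
    simp only [neg_neg]
    ring
  have ho' : ∀ t ∈ Ioo (-T) T,
      HasDerivAt (fun u => (z u - z (-u))/2) ((z1 t + z1 (-t))/2) t := fun t ht => by
    have h := ((hz' t ht).sub (hnegderiv z z1 hz' t ht)).div_const 2
    refine h.congr_deriv ?_
    ring
  have ho1' : ∀ t ∈ Ioo (-T) T,
      HasDerivAt (fun u => (z1 u + z1 (-u))/2) (m * ((z t - z (-t))/2)) t := fun t ht => by
    have h := ((hz1' t ht).add (hnegderiv z1 (fun u => -m * z (-u)) hz1' t ht)).div_const 2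
    refine h.congr_deriv ?_
    simp only [neg_neg]
    ring
  -- continuity of even/odd parts on [0, T]
  have hIccsub : Icc (0:ℝ) T ⊆ Icc (-T) T := Icc_subset_Icc (by linarith) le_rfl
  have hnegmap : MapsTo (fun x : ℝ => -x) (Icc (0:ℝ) T) (Icc (-T) T) := by
    intro x hx
    simp only [Set.mem_Icc] at hx ⊢
    constructor <;> linarith [hx.1, hx.2]
  have hznegC : ContinuousOn (fun u : ℝ => z (-u)) (Icc (0:ℝ) T) :=
    ContinuousOn.comp hzCont continuousOn_neg hnegmap
  have hz1negC : ContinuousOn (fun u : ℝ => z1 (-u)) (Icc (0:ℝ) T) :=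
    ContinuousOn.comp hz1Cont continuousOn_neg hnegmap
  have heC : ContinuousOn (fun u : ℝ => (z u + z (-u))/2) (Icc (0:ℝ) T) :=
    ((hzCont.mono hIccsub).add hznegC).div_const 2
  have he1C : ContinuousOn (fun u : ℝ => (z1 u - z1 (-u))/2) (Icc (0:ℝ) T) :=
    ((hz1Cont.mono hIccsub).sub hz1negC).div_const 2
  have hoC : ContinuousOn (fun u : ℝ => (z u - z (-u))/2) (Icc (0:ℝ) T) :=
    ((hzCont.mono hIccsub).sub hznegC).div_const 2
  have ho1C : ContinuousOn (fun u : ℝ => (z1 u + z1 (-u))/2) (Icc (0:ℝ) T) :=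
    ((hz1Cont.mono hIccsub).add hz1negC).div_const 2
  set r := Real.sqrt m with hrdef
  have hr0 : 0 < r := Real.sqrt_pos.mpr hm
  have hr2 : r ^ 2 = m := Real.sq_sqrt hm.le
  have hrepE := cos_rep hT hr2 heC he1C he' he1'
  have hrepO := sinh_rep hT hr2 hoC ho1C ho' ho1'
  -- odd part vanishes
  have hO : ∀ t ∈ Icc (0:ℝ) T, r * ((z t - z (-t))/2) = ((z1 0 + z1 0)/2) * Real.sinh (r*t) := by
    intro t ht
    have h := hrepO t ht
    rw [neg_zero] at h
    rw [h]; ring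
  have hz10 : (z1 0 + z1 0)/2 = 0 := by
    have h := hO T (right_mem_Icc.mpr hT.le)
    rw [hzT, hzmT] at h
    have hs : 0 < Real.sinh (r * T) := Real.sinh_pos_iff.mpr (mul_pos hr0 hT)
    have : ((z1 0 + z1 0)/2) * Real.sinh (r*T) = 0 := by linarith [h]
    exact (mul_eq_zero.mp this).resolve_right (ne_of_gt hs)
  have hOzero : ∀ t ∈ Icc (0:ℝ) T, z t - z (-t) = 0 := by
    intro t ht
    have h := hO t ht
    rw [hz10, zero_mul] at h
    have := mul_eq_zero.mp h
    rcases this with h' | h'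
    · exact absurd h' (ne_of_gt hr0)
    · linarith [h']
  -- even part representation
  have hE : ∀ t ∈ Icc (0:ℝ) T, r * ((z t + z (-t))/2) = r * z 0 * Real.cos (r*t) := by
    intro t ht
    have h := hrepE t ht
    rw [neg_zero] at h
    rw [h]; ring
  have heval : ∀ u ∈ Icc (0:ℝ) T, z u = z 0 * Real.cos (r*u) ∧ z (-u) = z 0 * Real.cos (r*u) := by
    intro u hu
    have h1 := hE u hu
    have h2 : z (-u) = z u := by linarith [hOzero u hu]
    rw [h2] at h1
    have hzu : z u = z 0 * Real.cos (r*u) := by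
      apply mul_left_cancel₀ (ne_of_gt hr0)
      linear_combination h1
    exact ⟨hzu, h2 ▸ hzu⟩
  have hz0ne : z 0 ≠ 0 := by
    intro h0
    apply hzt0
    rcases le_or_gt 0 t0 with h | h
    · rw [(heval t0 ⟨h, ht0.2⟩).1, h0, zero_mul]
    · have h' := (heval (-t0) ⟨by linarith, by linarith [ht0.1]⟩).2
      rw [neg_neg] at h'
      rw [h', h0, zero_mul]
  have hcos0 : Real.cos (r*T) = 0 := by
    have h := (heval T (right_mem_Icc.mpr hT.le)).1
    rw [hzT] at h
    exact (mul_eq_zero.mp h.symm).resolve_left hz0ne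
  obtain ⟨k, hk⟩ := Real.cos_eq_zero_iff.mp hcos0
  have hrT : 0 < r * T := mul_pos hr0 hT
  have hpi := Real.pi_pos
  have hk0 : 0 ≤ k := by
    by_contra hneg
    push_neg at hneg
    have : (k:ℝ) ≤ -1 := by exact_mod_cast Int.le_sub_one_of_lt hneg
    nlinarith [hk]
  have h1k : (1:ℝ) ≤ 2*(k:ℝ)+1 := by
    have : (0:ℝ) ≤ (k:ℝ) := by exact_mod_cast hk0
    linarith
  have hge : Real.pi / 2 ≤ r * T := by
    rw [hk]
    nlinarith
  have hfin : Real.pi / (2*T) ≤ r := by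
    rw [div_le_iff₀ (by linarith)]
    linarith
  calc (Real.pi / (2*T))^2 ≤ r^2 := by
        apply pow_le_pow_left₀ (div_nonneg hpi.le (by linarith)) hfin
    _ = m := hr2

theorem stmt15 (T : ℝ) (hT : 0 < T) :
    (∀ t ∈ Set.Icc (-T) T,
      iteratedDerivWithin 2 (fun t => Real.cos (Real.pi * t / (2 * T)))
          (Set.Icc (-T) T) t =
        -((Real.pi / (2 * T)) ^ 2) * Real.cos (Real.pi * (-t) / (2 * T))) ∧
    IsEig15 T ((Real.pi / (2 * T)) ^ 2) ∧
    (∀ m : ℝ, 0 < m → IsEig15 T m → (Real.pi / (2 * T)) ^ 2 ≤ m) := by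
  have hTT : -T < T := by linarith
  have hsU : UniqueDiffOn ℝ (Icc (-T) T) := uniqueDiffOn_Icc hTT
  have part1 : ∀ t ∈ Set.Icc (-T) T,
      iteratedDerivWithin 2 (fun t => Real.cos (Real.pi * t / (2 * T)))
          (Set.Icc (-T) T) t =
        -((Real.pi / (2 * T)) ^ 2) * Real.cos (Real.pi * (-t) / (2 * T)) := by
    intro t ht
    exact iter2_eq hsU ht (phi_deriv1 T) (phi_deriv2 T)
  refine ⟨part1, ⟨fun t => Real.cos (Real.pi * t / (2 * T)), ?_, ?_, ?_, ?_, ?_⟩, ?_⟩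
  · have hc : ContDiff ℝ 2 (fun t : ℝ => Real.pi * t / (2*T)) :=
      (contDiff_const.mul contDiff_id).div_const _
    exact ((Real.contDiff_cos.of_le le_top).comp hc).contDiffOn
  · exact ⟨0, ⟨by linarith, by linarith⟩, by norm_num⟩
  · exact part1
  · have h : Real.pi * (-T) / (2*T) = -(Real.pi/2) := by
      field_simp
    show Real.cos (Real.pi * (-T) / (2*T)) = 0
    rw [h, Real.cos_neg, Real.cos_pi_div_two]
  · have h : Real.pi * T / (2*T) = Real.pi/2 := by
      field_simp
    show Real.cos (Real.pi * T / (2*T)) = 0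
    rw [h, Real.cos_pi_div_two]
  · exact fun m hm h => min_eig T hT m hm h
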